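/- The double limit lim_{k→∞} lim_{n→∞} v_{n,k}/(n·|B_n(1^k)|) equals 1/2, where the inner limit is given by the rational expression (k x^k − k x^{k−1} − x^k + 1)/(k x^k − k x^{k−1} + x^{2k} − 3 x^k + 2) at x = 1/φ_k. -/

import Mathlib

open Filter Polynomial

lemma phi_lower_bound {p : ℝ} {k : ℕ} (hk : 2 ≤ k) (hpos : 0 < p)
    (hsum : p ^ k = ∑ i ∈ Finset.range k, p ^ i) : 8/5 ≤ p := by
  -- first show 1 < p
  have hge : 1 + p ≤ p ^ k := by
    have hsub : ({0, 1} : Finset ℕ) ⊆ Finset.range k := by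
      intro i hi
      simp only [Finset.mem_insert, Finset.mem_singleton] at hi
      rcases hi with rfl | rfl <;> simp [Finset.mem_range] <;> omega
    have := Finset.sum_le_sum_of_subset_of_nonneg hsub
      (fun i _ _ => pow_nonneg hpos.le i)
    rw [← hsum] at this
    simpa using this
  have h1 : 1 < p := by
    by_contra h
    push_neg at h
    have : p ^ k ≤ 1 := pow_le_one₀ hpos.le h
    linarith
  have hgeom := geom_sum_eq (ne_of_gt h1) k
  rw [hgeom] at hsum
  rw [eq_div_iff (by linarith : p - 1 ≠ 0)] at hsum
  have hkey : p ^ k * (2 - p) = 1 := by ring_nf; ring_nf at hsum; linarith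
  have hpk : 0 < p ^ k := pow_pos hpos k
  have h2p : 0 < 2 - p := by
    by_contra h
    push_neg at h
    nlinarith
  have hpk2 : p ^ 2 ≤ p ^ k := pow_le_pow_right₀ h1.le hk
  have : p ^ 2 * (2 - p) ≤ 1 := by
    calc p ^ 2 * (2 - p) ≤ p ^ k * (2 - p) :=
          mul_le_mul_of_nonneg_right hpk2 h2p.le
    _ = 1 := hkey
  nlinarith [sq_nonneg (p - 1), mul_pos (sub_pos.2 h1) (sub_pos.2 h1)]

theorem expected_bit_double_limit (φ : ℕ → ℝ)
    (hφ : ∀ k, 2 ≤ k → 0 < φ k ∧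
      ((X : ℝ[X]) ^ k - ∑ i ∈ Finset.range k, X ^ i).eval (φ k) = 0) :
    Tendsto (fun k : ℕ =>
        ((k : ℝ) * (1 / φ k) ^ k - k * (1 / φ k) ^ (k - 1) - (1 / φ k) ^ k + 1) /
        ((k : ℝ) * (1 / φ k) ^ k - k * (1 / φ k) ^ (k - 1) + (1 / φ k) ^ (2 * k)
          - 3 * (1 / φ k) ^ k + 2))
      atTop (nhds (1 / 2)) := by
  -- bounds on 1/φ k
  have hbound : ∀ᶠ k : ℕ in atTop, 0 < 1 / φ k ∧ 1 / φ k ≤ 5/8 := by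
    filter_upwards [eventually_ge_atTop 2] with k hk
    obtain ⟨hpos, heq⟩ := hφ k hk
    simp only [eval_sub, eval_pow, eval_X, eval_finset_sum] at heq
    have hsum : φ k ^ k = ∑ i ∈ Finset.range k, φ k ^ i := by linarith
    have hlb := phi_lower_bound hk hpos hsum
    constructor
    · positivity
    · rw [div_le_div_iff₀ hpos (by norm_num)]
      linarith
  set a : ℕ → ℝ := fun k => 1 / φ k with ha
  have hpow : ∀ m : ℕ, ∀ᶠ k : ℕ in atTop, 0 ≤ a k ^ m ∧ a k ^ m ≤ (5/8 : ℝ) ^ m := by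
    intro m
    filter_upwards [hbound] with k hk
    exact ⟨pow_nonneg hk.1.le m, pow_le_pow_left₀ hk.1.le hk.2 m⟩
  -- individual limits
  have h3 : Tendsto (fun k => a k ^ k) atTop (nhds 0) := by
    apply squeeze_zero' (by filter_upwards [hbound] with k hk; exact pow_nonneg hk.1.le _)
      (by filter_upwards [hbound] with k hk; exact pow_le_pow_left₀ hk.1.le hk.2 k)
    exact tendsto_pow_atTop_nhds_zero_of_lt_one (by norm_num) (by norm_num)
  have h4 : Tendsto (fun k => a k ^ (2 * k)) atTop (nhds 0) := by
    apply squeeze_zero' (by filter_upwards [hbound] with k hk; exact pow_nonneg hk.1.le _)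
      (by filter_upwards [hbound] with k hk
          calc a k ^ (2 * k) ≤ (5/8 : ℝ) ^ (2 * k) := pow_le_pow_left₀ hk.1.le hk.2 _
          _ = ((5/8 : ℝ) ^ 2) ^ k := by rw [pow_mul])
    exact tendsto_pow_atTop_nhds_zero_of_lt_one (by norm_num) (by norm_num)
  have hg : Tendsto (fun k : ℕ => (k : ℝ) * (5/8 : ℝ) ^ k) atTop (nhds 0) :=
    tendsto_self_mul_const_pow_of_lt_one (by norm_num) (by norm_num)
  have h1 : Tendsto (fun k : ℕ => (k : ℝ) * a k ^ k) atTop (nhds 0) := by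
    refine squeeze_zero' ?_ ?_ hg
    · filter_upwards [hbound] with k hk
      exact mul_nonneg (Nat.cast_nonneg k) (pow_nonneg hk.1.le _)
    · filter_upwards [hbound] with k hk
      exact mul_le_mul_of_nonneg_left (pow_le_pow_left₀ hk.1.le hk.2 k) (Nat.cast_nonneg k)
  have hg' : Tendsto (fun k : ℕ => (k : ℝ) * (5/8 : ℝ) ^ (k - 1)) atTop (nhds 0) := by
    have : Tendsto (fun k : ℕ => (8/5 : ℝ) * ((k : ℝ) * (5/8 : ℝ) ^ k)) atTop (nhds 0) := by
      simpa using hg.const_mul (8/5 : ℝ)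
    apply this.congr'
    filter_upwards [eventually_ge_atTop 1] with k hk
    have : (5/8 : ℝ) ^ k = (5/8 : ℝ) ^ (k - 1) * (5/8) := by
      rw [← pow_succ]
      congr 1
      omega
    rw [this]; ring
  have h2 : Tendsto (fun k : ℕ => (k : ℝ) * a k ^ (k - 1)) atTop (nhds 0) := by
    refine squeeze_zero' ?_ ?_ hg'
    · filter_upwards [hbound] with k hk
      exact mul_nonneg (Nat.cast_nonneg k) (pow_nonneg hk.1.le _)
    · filter_upwards [hbound] with k hk
      exact mul_le_mul_of_nonneg_left (pow_le_pow_left₀ hk.1.le hk.2 (k-1)) (Nat.cast_nonneg k)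
  have hnum : Tendsto (fun k : ℕ => (k : ℝ) * a k ^ k - k * a k ^ (k - 1) - a k ^ k + 1)
      atTop (nhds 1) := by
    have := (((h1.sub h2).sub h3).add tendsto_const_nhds (b := (1:ℝ)))
    simpa using this
  have hden : Tendsto (fun k : ℕ => (k : ℝ) * a k ^ k - k * a k ^ (k - 1) + a k ^ (2 * k)
      - 3 * a k ^ k + 2) atTop (nhds 2) := by
    have := ((((h1.sub h2).add h4).sub (h3.const_mul 3)).add
      tendsto_const_nhds (b := (2:ℝ)))
    simpa using this
  exact (hnum.div hden (by norm_num)).congr fun k => rfl
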